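/- Let G be a tree (a finite, connected, acyclic simple graph) on vertex set V containing distinct vertices R and j, let v be a vertex lying on the unique path P from R to j with v ∉ {R, j}, let u be a neighbor of v that does not lie on P, and let T be the vertex set of the connected component of u in G − v. Let C_R be the vertex set of the connected component of R in G − v. Then the reduced density operator Tr_T ( |G⟩⟨G| ) on ⨂_{w∈V∖T} ℂ² is separable with respect to the bipartition ( C_R , (V∖T)∖C_R ); moreover j and v belong to (V∖T)∖C_R. -/

import Mathlib

open scoped BigOperators

noncomputable section

/-- The state space of a collection of qubits indexed by `V`:
amplitudes on computational-basis configurations `V → Bool`. -/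
abbrev QState (V : Type*) := (V → Bool) → ℂ

variable {V : Type*}

/-- The inner product `⟨ψ|φ⟩`. -/
def qInner [Fintype V] [DecidableEq V] (ψ φ : QState V) : ℂ :=
  ∑ x, starRingEnd ℂ (ψ x) * φ x

/-- Pauli `X` acting on qubit `a`. -/
def pauliX [DecidableEq V] (a : V) (ψ : QState V) : QState V :=
  fun x => ψ (Function.update x a (!x a))

/-- Pauli `Z` acting on qubit `a`. -/
def pauliZ (a : V) (ψ : QState V) : QState V :=
  fun x => (if x a then (-1 : ℂ) else 1) * ψ x

/-- Pauli `Y` acting on qubit `a`. -/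
def pauliY [DecidableEq V] (a : V) (ψ : QState V) : QState V :=
  fun x => (if x a then Complex.I else -Complex.I) * ψ (Function.update x a (!x a))

/-- The tensor product `⨂_{b ∈ s} Z^{(b)}` of Pauli `Z` over the qubits in `s`. -/
def pauliZProd (s : Finset V) (ψ : QState V) : QState V :=
  fun x => (∏ b ∈ s, if x b then (-1 : ℂ) else 1) * ψ x

/-- A tensor product over the qubits in `s` of the diagonal single-qubit gate
`diag (f false, f true)`. -/
def diagProd (s : Finset V) (f : Bool → ℂ) (ψ : QState V) : QState V :=
  fun x => (∏ b ∈ s, f (x b)) * ψ x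

/-- The sign `(-1)^{x u · x v}` contributed by an edge `{u, v}`. -/
def edgeSign (x : V → Bool) : Sym2 V → ℂ :=
  Sym2.lift ⟨fun a b => if x a && x b then (-1 : ℂ) else 1,
    fun a b => by simp [Bool.and_comm]⟩

/-- The graph state `|G⟩ = (∏_{{u,v}∈E} CZ^{(uv)}) ⨂_v |+⟩^{(v)}` of a finite simple graph,
written out in amplitudes. -/
def graphState [Fintype V] [DecidableEq V] (G : SimpleGraph V) [DecidableRel G.Adj] :
    QState V :=
  fun x => ((Real.sqrt 2 : ℝ) : ℂ)⁻¹ ^ (Fintype.card V) * ∏ e ∈ G.edgeFinset, edgeSign x e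

/-- Local complementation `τ_a(G)` of a graph `G` at the vertex `a`: complement the
adjacency among the neighbors of `a`, leaving all other adjacencies unchanged. -/
def localComp (G : SimpleGraph V) (a : V) : SimpleGraph V where
  Adj u v :=
    (G.Adj a u ∧ G.Adj a v ∧ u ≠ v ∧ ¬ G.Adj u v) ∨
      ((¬ (G.Adj a u ∧ G.Adj a v)) ∧ G.Adj u v)
  symm := by
    constructor
    intro u v h
    rcases h with ⟨h1, h2, h3, h4⟩ | ⟨h1, h2⟩
    · exact Or.inl ⟨h2, h1, h3.symm, fun h => h4 (G.adj_symm h)⟩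
    · exact Or.inr ⟨fun h => h1 ⟨h.2, h.1⟩, G.adj_symm h2⟩
  loopless := by
    constructor
    intro u h
    rcases h with ⟨_, _, h3, _⟩ | ⟨_, h2⟩
    · exact h3 rfl
    · exact G.irrefl h2

instance [DecidableEq V] (G : SimpleGraph V) [DecidableRel G.Adj] (a : V) :
    DecidableRel (localComp G a).Adj := fun u v =>
  inferInstanceAs (Decidable
    ((G.Adj a u ∧ G.Adj a v ∧ u ≠ v ∧ ¬ G.Adj u v) ∨
      ((¬ (G.Adj a u ∧ G.Adj a v)) ∧ G.Adj u v)))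

/-- The induced subgraph of `G` on the vertices satisfying `P`. -/
def inducedSub (G : SimpleGraph V) (P : V → Prop) : SimpleGraph {v : V // P v} :=
  SimpleGraph.comap Subtype.val G

instance (G : SimpleGraph V) [DecidableRel G.Adj] (P : V → Prop) :
    DecidableRel (inducedSub G P).Adj := fun u v =>
  inferInstanceAs (Decidable (G.Adj u.1 v.1))

/-- The eigenvectors `|Z,+⟩ = |0⟩`, `|Z,-⟩ = |1⟩` of Pauli `Z`
(`s = false` the `+1`-eigenvector, `s = true` the `-1`-eigenvector). -/
def zVec (s : Bool) : Bool → ℂ := fun c => if c = s then 1 else 0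

/-- The eigenvectors `|X,±⟩ = (|0⟩ ± |1⟩)/√2` of Pauli `X`
(`s = false` the `+1`-eigenvector, `s = true` the `-1`-eigenvector). -/
def xVec (s : Bool) : Bool → ℂ :=
  fun c => ((Real.sqrt 2 : ℝ) : ℂ)⁻¹ * (if c && s then -1 else 1)

/-- The eigenvectors `|Y,±⟩ = (|0⟩ ± i|1⟩)/√2` of Pauli `Y`
(`s = false` the `+1`-eigenvector, `s = true` the `-1`-eigenvector). -/
def yVec (s : Bool) : Bool → ℂ :=
  fun c => ((Real.sqrt 2 : ℝ) : ℂ)⁻¹ *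
    (if c then (if s then -Complex.I else Complex.I) else 1)

/-- The rank-one projector `|v⟩⟨v|` on qubit `a` (identity elsewhere),
for a single-qubit vector `v`. -/
def projDir [DecidableEq V] (a : V) (v : Bool → ℂ) (ψ : QState V) : QState V :=
  fun x => v (x a) *
    (starRingEnd ℂ (v false) * ψ (Function.update x a false) +
      starRingEnd ℂ (v true) * ψ (Function.update x a true))

/-- The tensor product `|v⟩^{(a)} ⊗ |φ⟩` of a single-qubit state on qubit `a` with a state
on the remaining qubits. -/
def tensorQubit [DecidableEq V] (a : V) (v : Bool → ℂ) (φ : QState {u : V // u ≠ a}) :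
    QState V :=
  fun x => v (x a) * φ (fun u => x u.1)

/-- Apply a single-qubit gate with matrix entries `m r c = ⟨r|M|c⟩` on qubit `a`. -/
def applyGate [DecidableEq V] (a : V) (m : Bool → Bool → ℂ) (ψ : QState V) : QState V :=
  fun x => m (x a) false * ψ (Function.update x a false) +
    m (x a) true * ψ (Function.update x a true)

/-- The square roots `√(±iY) = (I ± iY)/√2`
(`s = false` for `√(+iY)`, `s = true` for `√(-iY)`). -/
def sqrtiY (s : Bool) : Bool → Bool → ℂ :=
  fun r c => ((Real.sqrt 2 : ℝ) : ℂ)⁻¹ *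
    (if s then (if r = false ∧ c = true then -1 else 1)
     else (if r = true ∧ c = false then -1 else 1))

/-- The Hadamard gate. -/
def hadamard : Bool → Bool → ℂ :=
  fun r c => ((Real.sqrt 2 : ℝ) : ℂ)⁻¹ * (if r && c then -1 else 1)

/-- Apply a tensor product of single-qubit gates, one on each qubit. -/
def applyLocal [Fintype V] [DecidableEq V] (u : V → Bool → Bool → ℂ) (ψ : QState V) :
    QState V :=
  fun x => ∑ y : V → Bool, (∏ v, u v (x v) (y v)) * ψ y

/-- `2×2` matrix multiplication (matrices as `Bool → Bool → ℂ`). -/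
def matMul2 (a b : Bool → Bool → ℂ) : Bool → Bool → ℂ :=
  fun r c => ∑ k : Bool, a r k * b k c

/-- Adjoint of a `2×2` matrix. -/
def matAdj2 (a : Bool → Bool → ℂ) : Bool → Bool → ℂ := fun r c => starRingEnd ℂ (a c r)

def idMat : Bool → Bool → ℂ := fun r c => if r = c then 1 else 0
def xMat : Bool → Bool → ℂ := fun r c => if r = c then 0 else 1
def yMat : Bool → Bool → ℂ := fun r c => if r = c then 0 else if r then Complex.I else -Complex.I
def zMat : Bool → Bool → ℂ := fun r c => if r = c then (if r then -1 else 1) else 0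

/-- A `2×2` matrix is unitary. -/
def IsUnitary2 (u : Bool → Bool → ℂ) : Prop := matMul2 (matAdj2 u) u = idMat

/-- A single-qubit Clifford unitary: a unitary conjugating `X` and `Z` into
`i^k·P` with `P` a Pauli matrix. -/
def IsClifford1 (u : Bool → Bool → ℂ) : Prop :=
  IsUnitary2 u ∧
    (∃ (k : ℕ) (P : Bool → Bool → ℂ), P ∈ ({idMat, xMat, yMat, zMat} : Set _) ∧
      matMul2 (matMul2 u xMat) (matAdj2 u) = Complex.I ^ k • P) ∧
    (∃ (k : ℕ) (P : Bool → Bool → ℂ), P ∈ ({idMat, xMat, yMat, zMat} : Set _) ∧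
      matMul2 (matMul2 u zMat) (matAdj2 u) = Complex.I ^ k • P)

/-- The action of the `n`-qubit Pauli operator `c · ⨂_v X^{xv v} Z^{zv v}`. -/
def pauliAction [Fintype V] (c : ℂ) (xv zv : V → Bool) (ψ : QState V) : QState V :=
  fun s => c * (∏ v, if zv v && (xor (s v) (xv v)) then (-1 : ℂ) else 1) *
    ψ (fun v => xor (s v) (xv v))

/-- The outer product `|ψ⟩⟨φ|` as a matrix on configurations. -/
def outer (ψ φ : QState V) : (V → Bool) → (V → Bool) → ℂ :=
  fun x y => ψ x * starRingEnd ℂ (φ y)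

open Classical in
/-- Partial trace keeping the qubits that satisfy `P` (tracing out the others). -/
def ptraceKeep [Fintype V] [DecidableEq V] (P : V → Prop)
    (ρ : (V → Bool) → (V → Bool) → ℂ) :
    ({v : V // P v} → Bool) → ({v : V // P v} → Bool) → ℂ :=
  fun x y => ∑ z : {v : V // ¬ P v} → Bool,
    ρ (fun w => if h : P w then x ⟨w, h⟩ else z ⟨w, h⟩)
      (fun w => if h : P w then y ⟨w, h⟩ else z ⟨w, h⟩)

open Classical in
/-- Apply a product of single-qubit bras `⟨bra v|` to each qubit `v` satisfying `P`,
leaving a state on the remaining qubits. -/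
def applyBras [Fintype V] [DecidableEq V] (P : V → Prop) (bra : V → Bool → ℂ)
    (ψ : QState V) : QState {v : V // ¬ P v} :=
  fun x => ∑ z : {v : V // P v} → Bool,
    (∏ v : {v : V // P v}, bra v.1 (z v)) *
      ψ (fun w => if h : P w then z ⟨w, h⟩ else x ⟨w, h⟩)

/-- A density operator: hermitian, trace one, positive semidefinite. -/
def IsDensityOp {α : Type*} [Fintype α] [DecidableEq α]
    (ρ : (α → Bool) → (α → Bool) → ℂ) : Prop :=
  (∀ x y, starRingEnd ℂ (ρ y x) = ρ x y) ∧ (∑ x, ρ x x = 1) ∧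
    ∀ ψ : (α → Bool) → ℂ, ∃ r : ℝ, 0 ≤ r ∧
      (∑ x, ∑ y, starRingEnd ℂ (ψ x) * ρ x y * ψ y) = (r : ℂ)

open Classical in
/-- Separability of an operator on the qubits indexed by `α` with respect to the
bipartition `(A, Aᶜ)`: a finite convex combination of tensor products of density
operators. -/
def SeparableWrt {α : Type*} [Fintype α] [DecidableEq α] (A : Set α)
    (ρ : (α → Bool) → (α → Bool) → ℂ) : Prop :=
  ∃ (k : ℕ) (p : Fin k → ℝ)
    (σ : Fin k → ({a : α // a ∈ A} → Bool) → ({a : α // a ∈ A} → Bool) → ℂ)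
    (τ : Fin k → ({a : α // a ∉ A} → Bool) → ({a : α // a ∉ A} → Bool) → ℂ),
    (∀ i, 0 ≤ p i) ∧ (∑ i, p i = 1) ∧
    (∀ i, IsDensityOp (σ i)) ∧ (∀ i, IsDensityOp (τ i)) ∧
    ∀ x y, ρ x y = ∑ i, (p i : ℂ) *
      (σ i (fun a => x a.1) (fun a => y a.1) * τ i (fun a => x a.1) (fun a => y a.1))


instance {α : Type*} [DecidableEq α] (r : α → α → Prop) [DecidableRel r] :
    DecidableRel (SimpleGraph.fromRel r).Adj := fun a b =>
  inferInstanceAs (Decidable (a ≠ b ∧ (r a b ∨ r b a)))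

/-- The line graph on `{1, …, n}` (as `Fin n`) with edges between consecutive vertices. -/
def lineGraph (n : ℕ) : SimpleGraph (Fin n) :=
  SimpleGraph.fromRel (fun i j => (i : ℕ) + 1 = (j : ℕ))

instance (n : ℕ) : DecidableRel (lineGraph n).Adj := fun a b =>
  inferInstanceAs (Decidable (a ≠ b ∧ ((a : ℕ) + 1 = (b : ℕ) ∨ (b : ℕ) + 1 = (a : ℕ))))

/-- The extension `I_R ⊗ s` of an operator `s` on `n` qubits by the identity on an extra
reference qubit labelled `0`. -/
def liftOp {n : ℕ} (s : QState (Fin n) → QState (Fin n)) (ψ : QState (Fin (n + 1))) :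
    QState (Fin (n + 1)) :=
  fun x => s (fun y => ψ (Fin.cons (x 0) y)) (fun k => x k.succ)

end


section AuxLemmas

variable {V : Type*}

lemma edgeSign_mk (x : V → Bool) (a b : V) :
    edgeSign x s(a, b) = if x a && x b then (-1 : ℂ) else 1 := Sym2.lift_mk _ a b

lemma edgeSign_cases (x : V → Bool) (e : Sym2 V) :
    edgeSign x e = 1 ∨ edgeSign x e = -1 := by
  induction e using Sym2.ind with
  | _ a b => rw [edgeSign_mk]; split <;> simp

lemma conj_edgeSign (x : V → Bool) (e : Sym2 V) :
    starRingEnd ℂ (edgeSign x e) = edgeSign x e := by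
  rcases edgeSign_cases x e with h | h <;> rw [h] <;> simp

lemma edgeSign_sq (x : V → Bool) (e : Sym2 V) :
    edgeSign x e * edgeSign x e = 1 := by
  rcases edgeSign_cases x e with h | h <;> rw [h] <;> ring

lemma edgeSign_congr {x y : V → Bool} {e : Sym2 V} (h : ∀ w ∈ e, x w = y w) :
    edgeSign x e = edgeSign y e := by
  induction e using Sym2.ind with
  | _ a b =>
    rw [edgeSign_mk, edgeSign_mk, h a (by simp), h b (by simp)]

lemma sum_flip {α : Type*} [Fintype α] [DecidableEq α] (a0 : α) (f : (α → Bool) → ℂ) :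
    ∑ x : α → Bool, f (Function.update x a0 (!x a0)) = ∑ x : α → Bool, f x := by
  have hinv : Function.Involutive (fun x : α → Bool => Function.update x a0 (!x a0)) := by
    intro x
    funext w
    rcases eq_or_ne w a0 with rfl | hw
    · simp
    · simp [Function.update_of_ne hw]
  exact (Fintype.sum_equiv hinv.toPerm (fun x => f (Function.update x a0 (!x a0))) f
    (fun x => rfl))

lemma sum_eval {α : Type*} [Fintype α] [DecidableEq α] (a0 : α) (h : Bool → ℂ) :
    ∑ x : α → Bool, h (x a0) = 2 ^ (Fintype.card α - 1) * (h false + h true) := by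
  have key : (2:ℂ) * ∑ x : α → Bool, h (x a0)
      = 2 ^ Fintype.card α * (h false + h true) := by
    have h2 : ∑ x : α → Bool, h (!x a0) = ∑ x : α → Bool, h (x a0) := by
      have := sum_flip a0 (fun x => h (x a0))
      simpa using this
    have h3 : ∀ x : α → Bool, h (x a0) + h (!x a0) = h false + h true := by
      intro x; cases hx : x a0 <;> simp [add_comm]
    calc (2:ℂ) * ∑ x : α → Bool, h (x a0)
        = (∑ x : α → Bool, h (x a0)) + ∑ x : α → Bool, h (!x a0) := by rw [h2]; ring
      _ = ∑ x : α → Bool, (h (x a0) + h (!x a0)) := by rw [Finset.sum_add_distrib]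
      _ = ∑ _x : α → Bool, (h false + h true) := by
          exact Finset.sum_congr rfl (fun x _ => h3 x)
      _ = (Fintype.card (α → Bool) : ℂ) * (h false + h true) := by
          rw [Finset.sum_const, Finset.card_univ, nsmul_eq_mul]
      _ = 2 ^ Fintype.card α * (h false + h true) := by
          rw [Fintype.card_fun]; push_cast; simp
  have hpos : 1 ≤ Fintype.card α := Fintype.card_pos (α := α) (h := ⟨a0⟩)
  have hc : Fintype.card α = (Fintype.card α - 1) + 1 := (Nat.sub_add_cancel hpos).symm
  rw [hc, pow_succ] at key
  have key2 : (2:ℂ) * ∑ x : α → Bool, h (x a0)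
      = 2 * (2 ^ (Fintype.card α - 1) * (h false + h true)) := by rw [key]; ring
  exact mul_left_cancel₀ (two_ne_zero (α := ℂ)) key2


open Complex in
lemma isDensityOp_rankone {α : Type*} [Fintype α] [DecidableEq α]
    (f : (α → Bool) → ℂ) (r : ℝ) (hr : 0 ≤ r)
    (hreal : ∀ x, starRingEnd ℂ (f x) = f x)
    (htr : ∑ x, (r : ℂ) * (f x * f x) = 1) :
    IsDensityOp (fun x y => (r : ℂ) * (f x * f y)) := by
  refine ⟨?_, htr, ?_⟩
  · intro x y
    simp only [map_mul, hreal, Complex.conj_ofReal]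
    ring
  · intro ψ
    refine ⟨r * Complex.normSq (∑ x, f x * ψ x), mul_nonneg hr (Complex.normSq_nonneg _), ?_⟩
    have inner : ∀ x, ∑ y, starRingEnd ℂ (ψ x) * ((r : ℂ) * (f x * f y)) * ψ y
        = (r : ℂ) * (starRingEnd ℂ (ψ x) * f x) * ∑ y, f y * ψ y := by
      intro x
      rw [Finset.mul_sum]
      exact Finset.sum_congr rfl fun y _ => by ring
    have hSconj : ∑ x, starRingEnd ℂ (ψ x) * f x
        = starRingEnd ℂ (∑ x, f x * ψ x) := by
      rw [map_sum]
      exact Finset.sum_congr rfl fun x _ => by rw [map_mul, hreal]; ring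
    calc ∑ x, ∑ y, starRingEnd ℂ (ψ x) * ((r : ℂ) * (f x * f y)) * ψ y
        = ∑ x, (r : ℂ) * (starRingEnd ℂ (ψ x) * f x) * ∑ y, f y * ψ y :=
          Finset.sum_congr rfl fun x _ => inner x
      _ = (r : ℂ) * (∑ x, starRingEnd ℂ (ψ x) * f x) * ∑ y, f y * ψ y := by
          rw [← Finset.sum_mul, ← Finset.mul_sum]
      _ = (r : ℂ) * (starRingEnd ℂ (∑ x, f x * ψ x) * ∑ x, f x * ψ x) := by
          rw [hSconj]; ring
      _ = ((r * Complex.normSq (∑ x, f x * ψ x) : ℝ) : ℂ) := by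
          rw [mul_comm (starRingEnd ℂ _), Complex.mul_conj]
          push_cast
          ring

lemma not_reachable_del {V : Type*} {G : SimpleGraph V} (hac : G.IsAcyclic)
    {R j v : V} (hRv : R ≠ v)
    (p : G.Walk R j) (hp : p.IsPath) (hv : v ∈ p.support) :
    ¬ ∃ h : j ≠ v, (inducedSub G (· ≠ v)).Reachable ⟨R, hRv⟩ ⟨j, h⟩ := by
  classical
  rintro ⟨hjv, ⟨w⟩⟩
  let emb : (inducedSub G (· ≠ v)) ↪g G :=
    SimpleGraph.Embedding.comap (Function.Embedding.subtype (· ≠ v)) G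
  let w' : G.Walk R j := w.map emb.toHom
  have hq : (⟨p, hp⟩ : G.Path R j) = w'.toPath := hac.path_unique _ _
  have hv' : v ∈ (w'.toPath : G.Walk R j).support := by
    rw [← hq]; exact hv
  have hv2 : v ∈ w'.support := w'.support_toPath_subset hv'
  have hv3 : v ∈ w.support.map emb.toHom := by
    change v ∈ (w.map emb.toHom).support at hv2
    rwa [SimpleGraph.Walk.support_map] at hv2
  obtain ⟨t, _, ht⟩ := List.mem_map.mp hv3
  exact t.2 ht

lemma cross_edge {V : Type*} {G : SimpleGraph V} (hac : G.IsAcyclic)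
    {v u : V} (hadj : G.Adj v u) {a b : V}
    (hab : G.Adj a b) (ha : a ≠ v)
    (hreach : (inducedSub G (· ≠ v)).Reachable ⟨u, hadj.ne'⟩ ⟨a, ha⟩)
    (hb : ¬ ∃ h : b ≠ v, (inducedSub G (· ≠ v)).Reachable ⟨u, hadj.ne'⟩ ⟨b, h⟩) :
    b = v ∧ a = u := by
  classical
  by_cases hbv : b = v
  · refine ⟨hbv, ?_⟩
    by_contra hau
    obtain ⟨w⟩ := hreach
    let emb : (inducedSub G (· ≠ v)) ↪g G :=
      SimpleGraph.Embedding.comap (Function.Embedding.subtype (· ≠ v)) G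
    let q0 : (inducedSub G (· ≠ v)).Walk ⟨u, hadj.ne'⟩ ⟨a, ha⟩ := w.toPath.val
    let q' : G.Walk u a := q0.map emb.toHom
    have hq'path : q'.IsPath :=
      SimpleGraph.Walk.map_isPath_of_injective (Subtype.val_injective) w.toPath.2
    have hvq' : v ∉ q'.support := by
      intro hmem
      change v ∈ (q0.map emb.toHom).support at hmem
      rw [SimpleGraph.Walk.support_map] at hmem
      obtain ⟨t, _, ht⟩ := List.mem_map.mp hmem
      exact t.2 ht
    have hva : G.Adj v a := (hbv ▸ hab).symm
    let w1 : G.Walk v u := SimpleGraph.Walk.cons hadj SimpleGraph.Walk.nil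
    let w2 : G.Walk v u := SimpleGraph.Walk.cons hva q'.reverse
    have hw1 : w1.IsPath := by
      simp [w1, SimpleGraph.Walk.cons_isPath_iff, hadj.ne]
    have hw2 : w2.IsPath := by
      refine SimpleGraph.Walk.IsPath.cons hq'path.reverse ?_
      rwa [SimpleGraph.Walk.support_reverse, List.mem_reverse]
    have heq : (⟨w1, hw1⟩ : G.Path v u) = ⟨w2, hw2⟩ := hac.path_unique _ _
    have haw2 : a ∈ w2.support := by
      have hmem : a ∈ q'.reverse.support := by
        rw [SimpleGraph.Walk.support_reverse, List.mem_reverse]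
        exact q'.end_mem_support
      rw [SimpleGraph.Walk.support_cons]
      exact List.mem_cons_of_mem _ hmem
    have haw1 : a ∈ w1.support := by
      have : w1 = w2 := congrArg Subtype.val heq
      rw [this]; exact haw2
    have : a = v ∨ a = u := by
      simpa [w1, SimpleGraph.Walk.support_cons] using haw1
    rcases this with h | h
    · exact ha h
    · exact hau h
  · exfalso
    have hadj' : (inducedSub G (· ≠ v)).Adj ⟨a, ha⟩ ⟨b, hbv⟩ := hab
    exact hb ⟨hbv, hreach.trans hadj'.reachable⟩

end AuxLemmas


set_option linter.unusedSectionVars false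
set_option maxHeartbeats 1000000

noncomputable section MoreAux
open Classical
variable {V : Type*} [Fintype V] [DecidableEq V] (G : SimpleGraph V) [DecidableRel G.Adj]

/-- Product of edge signs over all edges. -/
def sgnAll (x : V → Bool) : ℂ := ∏ e ∈ G.edgeFinset, edgeSign x e

/-- Product of edge signs over edges avoiding `T`. -/
def sgnOut (T : Set V) (x : {w : V // w ∉ T} → Bool) : ℂ :=
  ∏ e ∈ G.edgeFinset,
    if ∀ w ∈ e, w ∉ T then edgeSign (fun t => if h : t ∉ T then x ⟨t, h⟩ else false) e else 1

def liftIn (T : Set V) (A : Set {w : V // w ∉ T}) (v : V) (a : Bool)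
    (xA : {t : {w : V // w ∉ T} // t ∈ A} → Bool) : V → Bool :=
  fun w => if h : w ∉ T then
      (if h2 : (⟨w, h⟩ : {w : V // w ∉ T}) ∈ A then xA ⟨⟨w, h⟩, h2⟩
       else if w = v then a else false)
    else false

def liftOut (T : Set V) (A : Set {w : V // w ∉ T})
    (xB : {t : {w : V // w ∉ T} // t ∉ A} → Bool) : V → Bool :=
  fun w => if h : w ∉ T then
      (if h2 : (⟨w, h⟩ : {w : V // w ∉ T}) ∉ A then xB ⟨⟨w, h⟩, h2⟩ else false)
    else false

lemma conj_sgnAll (x : V → Bool) : starRingEnd ℂ (sgnAll G x) = sgnAll G x := by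
  rw [sgnAll, map_prod]
  exact Finset.prod_congr rfl fun e _ => conj_edgeSign x e

lemma sgnAll_sq (x : V → Bool) : sgnAll G x * sgnAll G x = 1 := by
  rw [sgnAll, ← Finset.prod_mul_distrib,
    Finset.prod_congr rfl (fun e _ => edgeSign_sq x e), Finset.prod_const_one]

lemma conj_sgnOut (T : Set V) (x : {w : V // w ∉ T} → Bool) :
    starRingEnd ℂ (sgnOut G T x) = sgnOut G T x := by
  rw [sgnOut, map_prod]
  refine Finset.prod_congr rfl fun e _ => ?_
  split
  · exact conj_edgeSign _ e
  · exact map_one _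

lemma conj_graphState (x : V → Bool) :
    starRingEnd ℂ (graphState G x) = graphState G x := by
  simp only [graphState, map_mul, map_pow, map_inv₀, Complex.conj_ofReal, map_prod]
  rw [Finset.prod_congr rfl (fun e _ => conj_edgeSign x e)]

open Classical in
lemma trace_formula (T : Set V)
    {v u : V} (hadj : G.Adj v u) (hvT : v ∉ T) (huT : u ∈ T)
    (htri : ∀ e ∈ G.edgeFinset, (∀ w ∈ e, w ∉ T) ∨ (∀ w ∈ e, w ∈ T) ∨ e = s(v, u))
    (x y : {w : V // w ∉ T} → Bool) :
    ptraceKeep (· ∉ T) (outer (graphState G) (graphState G)) x y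
      = (2 : ℂ)⁻¹ ^ Fintype.card V * 2 ^ Fintype.card {w : V // ¬ w ∉ T} *
        ((if x ⟨v, hvT⟩ = y ⟨v, hvT⟩ then 1 else 0) * (sgnOut G T x * sgnOut G T y)) := by
  have huT' : ¬ u ∉ T := not_not_intro huT
  have hmem : s(v, u) ∈ G.edgeFinset := by
    rw [SimpleGraph.mem_edgeFinset, SimpleGraph.mem_edgeSet]; exact hadj
  have hgs : ∀ (w : {t : V // t ∉ T} → Bool) (z : {t : V // ¬ t ∉ T} → Bool),
      graphState G (fun t => if h : t ∉ T then w ⟨t, h⟩ else z ⟨t, h⟩)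
        = ((Real.sqrt 2 : ℝ) : ℂ)⁻¹ ^ Fintype.card V * (sgnOut G T w *
            ((∏ e ∈ G.edgeFinset, if ∀ t ∈ e, t ∈ T
                then edgeSign (fun t => if h : ¬ t ∉ T then z ⟨t, h⟩ else false) e else 1) *
             (if w ⟨v, hvT⟩ && z ⟨u, huT'⟩ then (-1 : ℂ) else 1))) := by
    intro w z
    have perEdge : ∀ e ∈ G.edgeFinset,
        edgeSign (fun t => if h : t ∉ T then w ⟨t, h⟩ else z ⟨t, h⟩) e
          = (if ∀ t ∈ e, t ∉ T
                then edgeSign (fun t => if h : t ∉ T then w ⟨t, h⟩ else false) e else 1)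
            * ((if ∀ t ∈ e, t ∈ T
                then edgeSign (fun t => if h : ¬ t ∉ T then z ⟨t, h⟩ else false) e else 1)
              * (if e = s(v, u)
                then edgeSign (fun t => if h : t ∉ T then w ⟨t, h⟩ else z ⟨t, h⟩) e else 1)) := by
      intro e he
      revert he
      induction e using Sym2.ind with
      | _ a b =>
      intro he
      rcases htri _ he with h1 | h2 | h3
      · have ha : a ∉ T := h1 a (Sym2.mem_mk_left a b)
        have hne2 : ¬ ∀ t ∈ s(a, b), t ∈ T := fun hall => ha (hall a (Sym2.mem_mk_left a b))
        have hne3 : s(a, b) ≠ s(v, u) := fun heq =>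
          h1 u (by rw [heq]; exact Sym2.mem_mk_right v u) huT
        rw [if_pos h1, if_neg hne2, if_neg hne3, mul_one, mul_one]
        exact edgeSign_congr fun t ht => by simp only [dif_pos (h1 t ht)]
      · have hne1 : ¬ ∀ t ∈ s(a, b), t ∉ T := fun hall =>
          hall a (Sym2.mem_mk_left a b) (h2 a (Sym2.mem_mk_left a b))
        have hne3 : s(a, b) ≠ s(v, u) := fun heq =>
          hvT (h2 v (by rw [heq]; exact Sym2.mem_mk_left v u))
        rw [if_neg hne1, if_pos h2, if_neg hne3, mul_one, one_mul]
        exact edgeSign_congr fun t ht => by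
          simp only [dif_neg (not_not_intro (h2 t ht)), dif_pos (not_not_intro (h2 t ht))]
      · have hu2 : u ∈ s(a, b) := by rw [h3]; exact Sym2.mem_mk_right v u
        have hv2 : v ∈ s(a, b) := by rw [h3]; exact Sym2.mem_mk_left v u
        rw [if_neg (fun hall => hall u hu2 huT), if_neg (fun hall => hvT (hall v hv2)),
          if_pos h3, one_mul, one_mul]
    have hval : edgeSign (fun t => if h : t ∉ T then w ⟨t, h⟩ else z ⟨t, h⟩) s(v, u)
        = (if w ⟨v, hvT⟩ && z ⟨u, huT'⟩ then (-1 : ℂ) else 1) := by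
      rw [edgeSign_mk]
      simp only [dif_pos hvT, dif_neg huT']
    rw [show graphState G (fun t => if h : t ∉ T then w ⟨t, h⟩ else z ⟨t, h⟩)
        = ((Real.sqrt 2 : ℝ) : ℂ)⁻¹ ^ Fintype.card V *
          ∏ e ∈ G.edgeFinset, edgeSign (fun t => if h : t ∉ T then w ⟨t, h⟩ else z ⟨t, h⟩) e
        from rfl]
    rw [Finset.prod_congr rfl perEdge, Finset.prod_mul_distrib, Finset.prod_mul_distrib,
      Finset.prod_ite_eq' G.edgeFinset s(v, u), if_pos hmem, hval]
    rfl
  have hsummand : ∀ z : {t : V // ¬ t ∉ T} → Bool,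
      outer (graphState G) (graphState G)
        (fun t => if h : t ∉ T then x ⟨t, h⟩ else z ⟨t, h⟩)
        (fun t => if h : t ∉ T then y ⟨t, h⟩ else z ⟨t, h⟩)
      = (((Real.sqrt 2 : ℝ) : ℂ)⁻¹ ^ Fintype.card V * ((Real.sqrt 2 : ℝ) : ℂ)⁻¹ ^ Fintype.card V
          * (sgnOut G T x * sgnOut G T y)) *
        ((if x ⟨v, hvT⟩ && z ⟨u, huT'⟩ then (-1 : ℂ) else 1) *
          (if y ⟨v, hvT⟩ && z ⟨u, huT'⟩ then (-1 : ℂ) else 1)) := by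
    intro z
    simp only [outer]
    rw [conj_graphState, hgs x z, hgs y z]
    set Q : ℂ := ∏ e ∈ G.edgeFinset, if ∀ t ∈ e, t ∈ T
        then edgeSign (fun t => if h : ¬ t ∉ T then z ⟨t, h⟩ else false) e else 1 with hQ
    have hQsq : Q * Q = 1 := by
      rw [hQ, ← Finset.prod_mul_distrib]
      rw [Finset.prod_congr rfl (fun e (_ : e ∈ G.edgeFinset) => ?_), Finset.prod_const_one]
      split
      · exact edgeSign_sq _ e
      · exact one_mul 1
    linear_combination (((Real.sqrt 2 : ℝ) : ℂ)⁻¹ ^ Fintype.card V *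
      ((Real.sqrt 2 : ℝ) : ℂ)⁻¹ ^ Fintype.card V * (sgnOut G T x * sgnOut G T y) *
      ((if x ⟨v, hvT⟩ && z ⟨u, huT'⟩ then (-1 : ℂ) else 1) *
        (if y ⟨v, hvT⟩ && z ⟨u, huT'⟩ then (-1 : ℂ) else 1))) * hQsq
  have heval : ∑ z : {t : V // ¬ t ∉ T} → Bool,
      ((if x ⟨v, hvT⟩ && z ⟨u, huT'⟩ then (-1 : ℂ) else 1) *
        (if y ⟨v, hvT⟩ && z ⟨u, huT'⟩ then (-1 : ℂ) else 1))
      = 2 ^ (Fintype.card {t : V // ¬ t ∉ T} - 1) *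
        ((if x ⟨v, hvT⟩ && false then (-1 : ℂ) else 1) *
          (if y ⟨v, hvT⟩ && false then (-1 : ℂ) else 1) +
         (if x ⟨v, hvT⟩ && true then (-1 : ℂ) else 1) *
          (if y ⟨v, hvT⟩ && true then (-1 : ℂ) else 1)) :=
    sum_eval (⟨u, huT'⟩ : {t : V // ¬ t ∉ T})
      (fun b => (if x ⟨v, hvT⟩ && b then (-1 : ℂ) else 1) *
        (if y ⟨v, hvT⟩ && b then (-1 : ℂ) else 1))
  have hbridge : ptraceKeep (· ∉ T) (outer (graphState G) (graphState G)) x y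
      = ∑ z : {t : V // ¬ t ∉ T} → Bool,
        outer (graphState G) (graphState G)
          (fun t => if h : t ∉ T then x ⟨t, h⟩ else z ⟨t, h⟩)
          (fun t => if h : t ∉ T then y ⟨t, h⟩ else z ⟨t, h⟩) := by
    simp only [ptraceKeep]
    refine Finset.sum_congr (by congr!) fun z _ => ?_
    congr! 2 <;>
    · funext t
      by_cases h : t ∉ T
      · rw [dif_pos h, dif_pos h]
      · rw [dif_neg h, dif_neg h]
  rw [hbridge, Finset.sum_congr rfl (fun z _ => hsummand z), ← Finset.mul_sum, heval]
  have hNT1 : 1 ≤ Fintype.card {t : V // ¬ t ∉ T} :=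
    Fintype.card_pos_iff.mpr ⟨⟨u, huT'⟩⟩
  have hcc : (((Real.sqrt 2 : ℝ) : ℂ)⁻¹ ^ Fintype.card V) *
      (((Real.sqrt 2 : ℝ) : ℂ)⁻¹ ^ Fintype.card V) = (2 : ℂ)⁻¹ ^ Fintype.card V := by
    rw [← mul_pow, ← mul_inv, ← Complex.ofReal_mul,
      Real.mul_self_sqrt (by norm_num : (0:ℝ) ≤ 2)]
    norm_num
  have hpow : (2 : ℂ) ^ (Fintype.card {t : V // ¬ t ∉ T} - 1) * 2
      = 2 ^ Fintype.card {t : V // ¬ t ∉ T} := by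
    rw [← pow_succ, Nat.sub_add_cancel hNT1]
  cases hx : x ⟨v, hvT⟩ <;> cases hy : y ⟨v, hvT⟩ <;>
    simp only [Bool.and_false, Bool.and_true, Bool.false_and, Bool.true_and,
      Bool.false_eq_true, Bool.true_eq_false, reduceIte]
  · linear_combination ((2:ℂ) ^ (Fintype.card {t : V // ¬ t ∉ T} - 1) * 2 *
        (sgnOut G T x * sgnOut G T y)) * hcc +
      ((2:ℂ)⁻¹ ^ Fintype.card V * (sgnOut G T x * sgnOut G T y)) * hpow
  · ring
  · ring
  · linear_combination ((2:ℂ) ^ (Fintype.card {t : V // ¬ t ∉ T} - 1) * 2 *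
        (sgnOut G T x * sgnOut G T y)) * hcc +
      ((2:ℂ)⁻¹ ^ Fintype.card V * (sgnOut G T x * sgnOut G T y)) * hpow

open Classical in
lemma split_formula (T : Set V) (A : Set {w : V // w ∉ T})
    {v u : V} (hadj : G.Adj v u) (hvT : v ∉ T) (huT : u ∈ T)
    (hvA : (⟨v, hvT⟩ : {w : V // w ∉ T}) ∉ A)
    (htri : ∀ e ∈ G.edgeFinset, (∀ w ∈ e, w ∉ T) ∨ (∀ w ∈ e, w ∈ T) ∨ e = s(v, u))
    (hAcl : ∀ (a b : V) (ha : a ∉ T) (hb : b ∉ T), G.Adj a b →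
      (⟨a, ha⟩ : {w : V // w ∉ T}) ∈ A → (⟨b, hb⟩ : {w : V // w ∉ T}) ∈ A ∨ b = v)
    (x : {w : V // w ∉ T} → Bool) :
    sgnOut G T x = sgnAll G (liftIn T A v (x ⟨v, hvT⟩) (fun t => x t.1))
      * sgnAll G (liftOut T A (fun t => x t.1)) := by
  have eIn : ∀ (w : V) (h : w ∉ T), liftIn T A v (x ⟨v, hvT⟩) (fun t => x t.1) w
      = (if (⟨w, h⟩ : {w : V // w ∉ T}) ∈ A then x ⟨w, h⟩
         else if w = v then x ⟨v, hvT⟩ else false) := by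
    intro w h
    rw [liftIn, dif_pos h]
    by_cases h2 : (⟨w, h⟩ : {w : V // w ∉ T}) ∈ A
    · rw [dif_pos h2, if_pos h2]
    · rw [dif_neg h2, if_neg h2]
  have eInT : ∀ w : V, w ∈ T → liftIn T A v (x ⟨v, hvT⟩) (fun t => x t.1) w = false := by
    intro w h; rw [liftIn, dif_neg (not_not_intro h)]
  have eOut : ∀ (w : V) (h : w ∉ T), liftOut T A (fun t => x t.1) w
      = (if hn : (⟨w, h⟩ : {w : V // w ∉ T}) ∉ A then x ⟨w, h⟩ else false) := by
    intro w h
    rw [liftOut, dif_pos h]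
  have eOutT : ∀ w : V, w ∈ T → liftOut T A (fun t => x t.1) w = false := by
    intro w h; rw [liftOut, dif_neg (not_not_intro h)]
  rw [sgnOut, sgnAll, sgnAll, ← Finset.prod_mul_distrib]
  refine Finset.prod_congr rfl ?_
  intro e he
  revert he
  induction e using Sym2.ind with
  | _ a b =>
  intro he
  have hab : G.Adj a b := by rwa [SimpleGraph.mem_edgeFinset, SimpleGraph.mem_edgeSet] at he
  rcases htri _ he with h1 | h2 | h3
  · have ha : a ∉ T := h1 a (Sym2.mem_mk_left a b)
    have hb : b ∉ T := h1 b (Sym2.mem_mk_right a b)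
    rw [if_pos h1]
    simp only [edgeSign_mk, dif_pos ha, dif_pos hb, eIn a ha, eIn b hb, eOut a ha, eOut b hb]
    by_cases hA : (⟨a, ha⟩ : {w : V // w ∉ T}) ∈ A <;>
      by_cases hB : (⟨b, hb⟩ : {w : V // w ∉ T}) ∈ A
    · simp only [if_pos hA, if_pos hB, dif_neg (not_not_intro hA), dif_neg (not_not_intro hB)]
      simp
    · have hbv : b = v := (hAcl a b ha hb hab hA).resolve_left hB
      have hsub : (⟨b, hb⟩ : {w : V // w ∉ T}) = ⟨v, hvT⟩ := Subtype.ext hbv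
      simp only [if_pos hA, if_neg hB, if_pos hbv, dif_neg (not_not_intro hA), dif_pos hB, hsub]
      simp
    · have hav : a = v := (hAcl b a hb ha hab.symm hB).resolve_left hA
      have hsub : (⟨a, ha⟩ : {w : V // w ∉ T}) = ⟨v, hvT⟩ := Subtype.ext hav
      simp only [if_neg hA, if_pos hav, if_pos hB, dif_pos hA, dif_neg (not_not_intro hB), hsub]
      simp
    · simp only [if_neg hA, if_neg hB, dif_pos hA, dif_pos hB]
      by_cases hav : a = v
      · have hbv : b ≠ v := fun h => hab.ne (hav.trans h.symm)
        have hsub : (⟨a, ha⟩ : {w : V // w ∉ T}) = ⟨v, hvT⟩ := Subtype.ext hav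
        simp only [if_pos hav, if_neg hbv, hsub]
        simp
      · simp only [if_neg hav]
        simp
  · have ha : a ∈ T := h2 a (Sym2.mem_mk_left a b)
    have hb : b ∈ T := h2 b (Sym2.mem_mk_right a b)
    rw [if_neg (fun hall => (hall a (Sym2.mem_mk_left a b)) ha)]
    simp only [edgeSign_mk, eInT a ha, eInT b hb, eOutT a ha, eOutT b hb]
    simp
  · have hu2 : u ∈ s(a, b) := by rw [h3]; exact Sym2.mem_mk_right v u
    rw [if_neg (fun hall => (hall u hu2) huT), h3]
    simp only [edgeSign_mk, eInT u huT, eOutT u huT]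
    simp

end MoreAux

open Classical in
/-- Let `G` be a tree, `R ≠ j`, `v ∉ {R, j}` a vertex on the path `p`
from `R` to `j`, `u` a neighbor of `v` off the path, and `T` the vertex set of the
connected component of `u` in `G − v`.  Then the reduced state `Tr_T(|G⟩⟨G|)` is separable
with respect to the bipartition `(C_R, (V∖T)∖C_R)`, where `C_R` is the component of `R` in
`G − v`; moreover `j` and `v` belong to `(V∖T)∖C_R`. -/
theorem stmt12 {V : Type*} [Fintype V] [DecidableEq V]
    (G : SimpleGraph V) [DecidableRel G.Adj] (hT : G.IsTree)
    (R j v u : V) (hRj : R ≠ j) (hRv : R ≠ v) (hjv : j ≠ v)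
    (p : G.Walk R j) (hp : p.IsPath) (hv : v ∈ p.support)
    (hadj : G.Adj v u) (hup : u ∉ p.support)
    (T : Set V)
    (hT' : T = {w : V | ∃ hw : w ≠ v,
      (inducedSub G (· ≠ v)).Reachable ⟨u, hadj.ne'⟩ ⟨w, hw⟩})
    (hjT : j ∉ T) (hvT : v ∉ T) :
    ((¬ ∃ h : j ≠ v, (inducedSub G (· ≠ v)).Reachable ⟨R, hRv⟩ ⟨j, h⟩) ∧
        (¬ ∃ h : v ≠ v, (inducedSub G (· ≠ v)).Reachable ⟨R, hRv⟩ ⟨v, h⟩)) ∧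
      SeparableWrt
        {t : {w : V // w ∉ T} | ∃ h : t.1 ≠ v,
          (inducedSub G (· ≠ v)).Reachable ⟨R, hRv⟩ ⟨t.1, h⟩}
        (ptraceKeep (· ∉ T) (outer (graphState G) (graphState G))) := by
  classical
  have hac : G.IsAcyclic := hT.2
  refine ⟨⟨not_reachable_del hac hRv p hp hv, by rintro ⟨h, -⟩; exact h rfl⟩, ?_⟩
  have huT : u ∈ T := by rw [hT']; exact ⟨hadj.ne', SimpleGraph.Reachable.refl _⟩
  set A : Set {w : V // w ∉ T} :=
    {t : {w : V // w ∉ T} | ∃ h : t.1 ≠ v,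
      (inducedSub G (· ≠ v)).Reachable ⟨R, hRv⟩ ⟨t.1, h⟩} with hAdef
  have hvA : (⟨v, hvT⟩ : {w : V // w ∉ T}) ∉ A := by
    rw [hAdef]; rintro ⟨h, -⟩; exact h rfl
  have htri : ∀ e ∈ G.edgeFinset, (∀ w ∈ e, w ∉ T) ∨ (∀ w ∈ e, w ∈ T) ∨ e = s(v, u) := by
    intro e he
    revert he
    induction e using Sym2.ind with
    | _ a b =>
    intro he
    have hab : G.Adj a b := by rwa [SimpleGraph.mem_edgeFinset, SimpleGraph.mem_edgeSet] at he
    by_cases haT : a ∈ T <;> by_cases hbT : b ∈ T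
    · exact Or.inr (Or.inl (fun w hw => by
        rcases Sym2.mem_iff.mp hw with rfl | rfl <;> assumption))
    · right; right
      rw [hT'] at haT hbT
      obtain ⟨hav, har⟩ := haT
      obtain ⟨hbv, hau⟩ := cross_edge hac hadj hab hav har hbT
      rw [hau, hbv, Sym2.eq_swap]
    · right; right
      rw [hT'] at haT hbT
      obtain ⟨hbv, hbr⟩ := hbT
      obtain ⟨hav2, hbu⟩ := cross_edge hac hadj hab.symm hbv hbr haT
      rw [hav2, hbu]
    · exact Or.inl (fun w hw => by
        rcases Sym2.mem_iff.mp hw with rfl | rfl <;> assumption)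
  have hAcl : ∀ (a b : V) (ha : a ∉ T) (hb : b ∉ T), G.Adj a b →
      (⟨a, ha⟩ : {w : V // w ∉ T}) ∈ A → (⟨b, hb⟩ : {w : V // w ∉ T}) ∈ A ∨ b = v := by
    intro a b ha hb hab hmem
    obtain ⟨hav, har⟩ := hmem
    by_cases hbv : b = v
    · exact Or.inr hbv
    · refine Or.inl ⟨hbv, har.trans (SimpleGraph.Adj.reachable ?_)⟩
      exact (hab : (inducedSub G (· ≠ v)).Adj ⟨a, hav⟩ ⟨b, hbv⟩)
  -- cardinalities
  have hNVsum : Fintype.card {w : V // w ∉ T} + Fintype.card {w : V // ¬ w ∉ T}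
      = Fintype.card V := by
    have h := Fintype.card_congr (Equiv.sumCompl (fun w : V => w ∉ T))
    rwa [Fintype.card_sum] at h
  have hNKsum : Fintype.card {t : {w : V // w ∉ T} // t ∈ A}
      + Fintype.card {t : {w : V // w ∉ T} // ¬ t ∈ A} = Fintype.card {w : V // w ∉ T} := by
    have h := Fintype.card_congr (Equiv.sumCompl (fun t : {w : V // w ∉ T} => t ∈ A))
    rwa [Fintype.card_sum] at h
  have hNB1 : 1 ≤ Fintype.card {t : {w : V // w ∉ T} // ¬ t ∈ A} :=
    Fintype.card_pos_iff.mpr ⟨⟨⟨v, hvT⟩, hvA⟩⟩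
  have hNV : Fintype.card V = Fintype.card {t : {w : V // w ∉ T} // t ∈ A}
      + Fintype.card {t : {w : V // w ∉ T} // ¬ t ∈ A}
      + Fintype.card {w : V // ¬ w ∉ T} := by omega
  have hconst : (2:ℂ)⁻¹ ^ Fintype.card V * 2 ^ Fintype.card {w : V // ¬ w ∉ T}
      = (1/2 : ℂ) * ((2:ℂ)⁻¹ ^ Fintype.card {t : {w : V // w ∉ T} // t ∈ A} *
        (2 * (2:ℂ)⁻¹ ^ Fintype.card {t : {w : V // w ∉ T} // ¬ t ∈ A})) := by
    have h1 : (2:ℂ)⁻¹ ^ Fintype.card {w : V // ¬ w ∉ T}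
        * 2 ^ Fintype.card {w : V // ¬ w ∉ T} = 1 := by
      rw [← mul_pow]; norm_num
    rw [hNV, pow_add, pow_add]
    linear_combination ((2:ℂ)⁻¹ ^ Fintype.card {t : {w : V // w ∉ T} // t ∈ A} *
      (2:ℂ)⁻¹ ^ Fintype.card {t : {w : V // w ∉ T} // ¬ t ∈ A}) * h1
  refine ⟨2, fun _ => (1/2 : ℝ),
    fun i xA yA => (((2:ℝ)⁻¹ ^ Fintype.card {t : {w : V // w ∉ T} // t ∈ A} : ℝ) : ℂ) *
      (sgnAll G (liftIn T A v (decide (i = 1)) xA) * sgnAll G (liftIn T A v (decide (i = 1)) yA)),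
    fun i xB yB => (((2 * (2:ℝ)⁻¹ ^ Fintype.card {t : {w : V // w ∉ T} // ¬ t ∈ A} : ℝ)) : ℂ) *
      ((((if xB ⟨⟨v, hvT⟩, hvA⟩ = decide (i = 1) then (1:ℂ) else 0) * sgnAll G (liftOut T A xB))) *
       (((if yB ⟨⟨v, hvT⟩, hvA⟩ = decide (i = 1) then (1:ℂ) else 0) * sgnAll G (liftOut T A yB)))),
    ?_, ?_, ?_, ?_, ?_⟩
  · intro i; norm_num
  · rw [Fin.sum_univ_two]; norm_num
  · intro i
    have htr : ∑ xA : {t : {w : V // w ∉ T} // t ∈ A} → Bool,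
        (((2:ℝ)⁻¹ ^ Fintype.card {t : {w : V // w ∉ T} // t ∈ A} : ℝ) : ℂ) *
          (sgnAll G (liftIn T A v (decide (i = 1)) xA) *
            sgnAll G (liftIn T A v (decide (i = 1)) xA)) = 1 := by
      have h1 : ∀ xA : {t : {w : V // w ∉ T} // t ∈ A} → Bool,
          (((2:ℝ)⁻¹ ^ Fintype.card {t : {w : V // w ∉ T} // t ∈ A} : ℝ) : ℂ) *
            (sgnAll G (liftIn T A v (decide (i = 1)) xA) *
              sgnAll G (liftIn T A v (decide (i = 1)) xA))
          = (((2:ℝ)⁻¹ ^ Fintype.card {t : {w : V // w ∉ T} // t ∈ A} : ℝ) : ℂ) := by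
        intro xA; rw [sgnAll_sq, mul_one]
      rw [Finset.sum_congr rfl (fun xA _ => h1 xA), Finset.sum_const, Finset.card_univ,
        Fintype.card_fun, Fintype.card_bool, nsmul_eq_mul]
      push_cast
      rw [← mul_pow]
      norm_num
    have hd := isDensityOp_rankone
      (fun xA : {t : {w : V // w ∉ T} // t ∈ A} → Bool =>
        sgnAll G (liftIn T A v (decide (i = 1)) xA))
      ((2:ℝ)⁻¹ ^ Fintype.card {t : {w : V // w ∉ T} // t ∈ A}) (by positivity)
      (fun xA => conj_sgnAll G _) htr
    convert hd
  · intro i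
    have h1 : ∀ xB : {t : {w : V // w ∉ T} // ¬ t ∈ A} → Bool,
        (((2 * (2:ℝ)⁻¹ ^ Fintype.card {t : {w : V // w ∉ T} // ¬ t ∈ A} : ℝ)) : ℂ) *
          (((if xB ⟨⟨v, hvT⟩, hvA⟩ = decide (i = 1) then (1:ℂ) else 0) *
              sgnAll G (liftOut T A xB)) *
           ((if xB ⟨⟨v, hvT⟩, hvA⟩ = decide (i = 1) then (1:ℂ) else 0) *
              sgnAll G (liftOut T A xB)))
        = (((2 * (2:ℝ)⁻¹ ^ Fintype.card {t : {w : V // w ∉ T} // ¬ t ∈ A} : ℝ)) : ℂ) *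
            (if xB ⟨⟨v, hvT⟩, hvA⟩ = decide (i = 1) then (1:ℂ) else 0) := by
      intro xB
      by_cases hc : xB ⟨⟨v, hvT⟩, hvA⟩ = decide (i = 1)
      · rw [if_pos hc, one_mul, sgnAll_sq]
      · rw [if_neg hc]; ring
    have htr : ∑ xB : {t : {w : V // w ∉ T} // ¬ t ∈ A} → Bool,
        (((2 * (2:ℝ)⁻¹ ^ Fintype.card {t : {w : V // w ∉ T} // ¬ t ∈ A} : ℝ)) : ℂ) *
          (((if xB ⟨⟨v, hvT⟩, hvA⟩ = decide (i = 1) then (1:ℂ) else 0) *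
              sgnAll G (liftOut T A xB)) *
           ((if xB ⟨⟨v, hvT⟩, hvA⟩ = decide (i = 1) then (1:ℂ) else 0) *
              sgnAll G (liftOut T A xB))) = 1 := by
      rw [Finset.sum_congr rfl (fun xB _ => h1 xB), ← Finset.mul_sum]
      have h2 : ∑ xB : {t : {w : V // w ∉ T} // ¬ t ∈ A} → Bool,
          (if xB ⟨⟨v, hvT⟩, hvA⟩ = decide (i = 1) then (1:ℂ) else 0)
          = 2 ^ (Fintype.card {t : {w : V // w ∉ T} // ¬ t ∈ A} - 1) *
            ((if false = decide (i = 1) then (1:ℂ) else 0) +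
             (if true = decide (i = 1) then (1:ℂ) else 0)) :=
        sum_eval (⟨⟨v, hvT⟩, hvA⟩ : {t : {w : V // w ∉ T} // ¬ t ∈ A})
          (fun b => if b = decide (i = 1) then (1:ℂ) else 0)
      rw [h2]
      have h3 : ((if false = decide (i = 1) then (1:ℂ) else 0) +
          (if true = decide (i = 1) then (1:ℂ) else 0)) = 1 := by
        cases hd : decide (i = 1) <;> simp
      rw [h3, mul_one]
      have hpowB : (2:ℂ) * 2 ^ (Fintype.card {t : {w : V // w ∉ T} // ¬ t ∈ A} - 1)
          = 2 ^ Fintype.card {t : {w : V // w ∉ T} // ¬ t ∈ A} := by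
        rw [mul_comm, ← pow_succ, Nat.sub_add_cancel hNB1]
      have hinv2 : (2:ℂ)⁻¹ ^ Fintype.card {t : {w : V // w ∉ T} // ¬ t ∈ A} *
          2 ^ Fintype.card {t : {w : V // w ∉ T} // ¬ t ∈ A} = 1 := by
        rw [← mul_pow]; norm_num
      push_cast
      linear_combination ((2:ℂ)⁻¹ ^ Fintype.card {t : {w : V // w ∉ T} // ¬ t ∈ A}) * hpowB
        + hinv2
    have hd := isDensityOp_rankone
      (fun xB : {t : {w : V // w ∉ T} // ¬ t ∈ A} → Bool =>
        (if xB ⟨⟨v, hvT⟩, hvA⟩ = decide (i = 1) then (1:ℂ) else 0) * sgnAll G (liftOut T A xB))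
      (2 * (2:ℝ)⁻¹ ^ Fintype.card {t : {w : V // w ∉ T} // ¬ t ∈ A}) (by positivity)
      (fun xB => by rw [map_mul, conj_sgnAll]; congr 1; split <;> simp) htr
    convert hd
  · intro x y
    rw [trace_formula G T hadj hvT huT htri x y, Fin.sum_univ_two]
    simp only [show (decide ((0 : Fin 2) = 1)) = false from rfl,
      show (decide ((1 : Fin 2) = 1)) = true from rfl]
    have hsx := split_formula G T A hadj hvT huT hvA htri hAcl x
    have hsy := split_formula G T A hadj hvT huT hvA htri hAcl y
    cases hx : x ⟨v, hvT⟩ <;> cases hy : y ⟨v, hvT⟩ <;>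
      rw [hx] at hsx <;> rw [hy] at hsy <;>
      simp only [hx, hy, Bool.false_eq_true, Bool.true_eq_false, reduceIte] <;>
      rw [hsx, hsy] <;> push_cast <;>
      simp only [decide_true, decide_false, Bool.false_eq_true, Bool.true_eq_false, reduceIte]
    · linear_combination (sgnAll G (liftIn T A v false fun t => x t.1) *
        sgnAll G (liftIn T A v false fun t => y t.1) *
        sgnAll G (liftOut T A fun t => x t.1) *
        sgnAll G (liftOut T A fun t => y t.1)) * hconst
    · ring
    · ring
    · linear_combination (sgnAll G (liftIn T A v true fun t => x t.1) *
        sgnAll G (liftIn T A v true fun t => y t.1) *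
        sgnAll G (liftOut T A fun t => x t.1) *
        sgnAll G (liftOut T A fun t => y t.1)) * hconst
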